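/- Let X, Y, Z be independent with X ~ Exp(λ_X), Y ~ Exp(λ_Y), Z ~ Exp(1/Ω), and constants ρ, τ, ξ > 0 with τ < ξ. Then P( τ(ρZ+1) < X, X < ξ(ρZ+1), Y > θ ) = e^{−λ_Y θ}·( e^{−λ_X τ}/(1+λ_X ρτΩ) − e^{−λ_X ξ}/(1+λ_X ρξΩ) ), where θ = max(τ, ξ) = ξ. -/

import Mathlib

open MeasureTheory ProbabilityTheory Real

open Set
open scoped ENNReal

lemma expMeasure_apply {r : ℝ} {s : Set ℝ} (hs : MeasurableSet s) :
    expMeasure r s = ∫⁻ x in s, exponentialPDF r x := by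
  rw [expMeasure, gammaMeasure, withDensity_apply _ hs]; rfl

lemma expMeasure_Iio_zero {r : ℝ} : expMeasure r (Iio 0) = 0 := by
  rw [expMeasure_apply measurableSet_Iio, lintegral_exponentialPDF_of_nonpos le_rfl]

lemma expMeasure_ae_nonneg (r : ℝ) : ∀ᵐ z ∂(expMeasure r), 0 ≤ z := by
  rw [ae_iff]
  have h : {z : ℝ | ¬ 0 ≤ z} = Iio 0 := by ext z; simp [not_le]
  rw [h, expMeasure_Iio_zero]

lemma expMeasure_Ioi {r t : ℝ} (hr : 0 < r) (ht : 0 ≤ t) :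
    expMeasure r (Ioi t) = ENNReal.ofReal (exp (-(r * t))) := by
  have := isProbabilityMeasure_expMeasure hr
  have h1 : (0:ℝ) ≤ 1 - exp (-(r * t)) := by
    have : exp (-(r * t)) ≤ 1 := exp_le_one_iff.2 (by nlinarith)
    linarith
  have hIic : expMeasure r (Iic t) = ENNReal.ofReal (1 - exp (-(r * t))) := by
    rw [expMeasure_apply measurableSet_Iic, lintegral_exponentialPDF_eq_antiDeriv hr, if_pos ht]
  have hc : Ioi t = (Iic t)ᶜ := by simp
  rw [hc, measure_compl measurableSet_Iic (measure_ne_top _ _), hIic, measure_univ,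
    ← ENNReal.ofReal_one, ← ENNReal.ofReal_sub _ h1, sub_sub_cancel]

lemma expMeasure_singleton {r b : ℝ} : expMeasure r {b} = 0 :=
  (withDensity_absolutelyContinuous volume _) (Real.volume_singleton)

lemma expMeasure_Ioo {r a b : ℝ} (hr : 0 < r) (ha : 0 ≤ a) (hab : a < b) :
    expMeasure r (Ioo a b) = ENNReal.ofReal (exp (-(r * a)) - exp (-(r * b))) := by
  have := isProbabilityMeasure_expMeasure hr
  have hu : Ioo a b ∪ Ici b = Ioi a := Ioo_union_Ici_eq_Ioi hab
  have hd : Disjoint (Ioo a b) (Ici b) := by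
    apply Set.disjoint_left.2; rintro x ⟨_, hx2⟩ hx3; exact absurd hx3 (not_le.2 hx2)
  have hIci : expMeasure r (Ici b) = ENNReal.ofReal (exp (-(r * b))) := by
    have : Ici b = {b} ∪ Ioi b := by ext x; simp [le_iff_lt_or_eq, or_comm, eq_comm]
    have hb : 0 ≤ b := ha.trans hab.le
    rw [this, measure_union (by simp) measurableSet_Ioi, expMeasure_singleton, zero_add,
      expMeasure_Ioi hr hb]
  have key : expMeasure r (Ioo a b) + expMeasure r (Ici b) = expMeasure r (Ioi a) := by
    rw [← measure_union hd measurableSet_Ici, hu]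
  have := ENNReal.eq_sub_of_add_eq (by rw [hIci]; exact ENNReal.ofReal_ne_top) key
  rw [this, hIci, expMeasure_Ioi hr ha, ← ENNReal.ofReal_sub _ (exp_pos _).le]

lemma expMeasure_lintegral_exp {r a : ℝ} (hr : 0 < r) (ha : 0 ≤ a) :
    ∫⁻ z, ENNReal.ofReal (exp (-(a * z))) ∂(expMeasure r)
      = ENNReal.ofReal (r / (r + a)) := by
  have hra : 0 < r + a := by linarith
  rw [expMeasure, gammaMeasure,
    lintegral_withDensity_eq_lintegral_mul _ (show Measurable (gammaPDF 1 r) from (measurable_gammaPDFReal 1 r).ennreal_ofReal)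
      (by fun_prop)]
  have hpt : ∀ z : ℝ, (gammaPDF 1 r * fun z => ENNReal.ofReal (exp (-(a * z)))) z
      = ENNReal.ofReal (r / (r + a)) * exponentialPDF (r + a) z := by
    intro z
    have hgp : gammaPDF 1 r z = exponentialPDF r z := rfl
    simp only [Pi.mul_apply, hgp]
    rcases lt_or_ge z 0 with hz | hz
    · rw [exponentialPDF_of_neg hz, exponentialPDF_of_neg hz, zero_mul, mul_zero]
    · rw [exponentialPDF_of_nonneg hz, exponentialPDF_of_nonneg hz,
        ← ENNReal.ofReal_mul (by positivity), ← ENNReal.ofReal_mul (by positivity)]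
      congr 1
      rw [show -((r+a)*z) = -(r*z) + -(a*z) by ring, exp_add]
      field_simp
  simp only [hpt]
  rw [lintegral_const_mul _ (show Measurable (exponentialPDF (r+a)) from (measurable_exponentialPDFReal (r+a)).ennreal_ofReal), lintegral_exponentialPDF_eq_one hra, mul_one]


lemma expMeasure_lintegral_exp' {r c d : ℝ} (hr : 0 < r) (hd : 0 ≤ d) :
    ∫⁻ z, ENNReal.ofReal (exp (-(c + d * z))) ∂(expMeasure r)
      = ENNReal.ofReal (exp (-c) * (r / (r + d))) := by
  have h : ∀ z : ℝ, ENNReal.ofReal (exp (-(c + d * z)))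
      = ENNReal.ofReal (exp (-c)) * ENNReal.ofReal (exp (-(d * z))) := fun z => by
    rw [show -(c + d * z) = -c + -(d * z) by ring, exp_add,
      ENNReal.ofReal_mul (exp_pos _).le]
  simp only [h]
  rw [lintegral_const_mul _ (by fun_prop), expMeasure_lintegral_exp hr hd,
    ENNReal.ofReal_mul (exp_pos _).le]


/-- The term J₂₂ of Appendix B in exact form: for independent X ~ Exp(lamX),
Y ~ Exp(lamY), Z ~ Exp(1/Om), and 0 < τ < ξ with θ = max(τ, ξ),
P( τ(ρZ+1) < X, X < ξ(ρZ+1), Y > θ )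
  = e^{−lamY·θ}·( e^{−lamX·τ}/(1+lamX·ρτ·Om) − e^{−lamX·ξ}/(1+lamX·ρξ·Om) ). -/
theorem stmt15 {Ω : Type*} [MeasurableSpace Ω] (Pr : Measure Ω) [IsProbabilityMeasure Pr]
    (X Y Z : Ω → ℝ) (hXm : Measurable X) (hYm : Measurable Y) (hZm : Measurable Z)
    (lamX lamY Om ρ τ ξ : ℝ) (hlamX : 0 < lamX) (hlamY : 0 < lamY) (hOm : 0 < Om) (hρ : 0 < ρ)
    (hτ : 0 < τ) (hτξ : τ < ξ)
    (hX : Measure.map X Pr = expMeasure lamX)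
    (hY : Measure.map Y Pr = expMeasure lamY)
    (hZ : Measure.map Z Pr = expMeasure (1 / Om))
    (hindep : iIndepFun ![X, Y, Z] Pr) :
    Pr {ω | τ * (ρ * Z ω + 1) < X ω ∧ X ω < ξ * (ρ * Z ω + 1) ∧ Y ω > max τ ξ}
      = ENNReal.ofReal
          (Real.exp (-lamY * max τ ξ) *
            (Real.exp (-lamX * τ) / (1 + lamX * ρ * τ * Om)
              - Real.exp (-lamX * ξ) / (1 + lamX * ρ * ξ * Om))) := by
  simp only [neg_mul]
  have hOm' : (0:ℝ) < 1 / Om := by positivity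
  haveI := isProbabilityMeasure_expMeasure hlamX
  haveI := isProbabilityMeasure_expMeasure hlamY
  haveI := isProbabilityMeasure_expMeasure hOm'
  have hξ : 0 < ξ := hτ.trans hτξ
  set θ := max τ ξ with hθdef
  have hθ : 0 ≤ θ := hτ.le.trans (le_max_left τ ξ)
  set S : Set (ℝ × ℝ) := {p : ℝ × ℝ | τ * (ρ * p.2 + 1) < p.1 ∧ p.1 < ξ * (ρ * p.2 + 1)}
    with hSdef
  have hS : MeasurableSet S :=
    (measurableSet_lt (by fun_prop) measurable_fst).inter
      (measurableSet_lt measurable_fst (by fun_prop))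
  have hmeas_all : ∀ i, Measurable (![X, Y, Z] i) := fun i => by
    fin_cases i <;> assumption
  have hPairY : IndepFun (fun ω => (X ω, Z ω)) Y Pr := by
    have := hindep.indepFun_prodMk hmeas_all 0 2 1 (by decide) (by decide)
    simpa using this
  have hXZ : IndepFun X Z Pr := by
    have := hindep.indepFun (i := 0) (j := 2) (by decide)
    simpa using this
  have hmapXZ : Pr.map (fun ω => (X ω, Z ω)) = (expMeasure lamX).prod (expMeasure (1 / Om)) := by
    rw [← hX, ← hZ]
    exact (indepFun_iff_map_prod_eq_prod_map_map hXm.aemeasurable hZm.aemeasurable).mp hXZ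
  have hevent : {ω | τ * (ρ * Z ω + 1) < X ω ∧ X ω < ξ * (ρ * Z ω + 1) ∧ Y ω > θ}
      = ((fun ω => (X ω, Z ω)) ⁻¹' S) ∩ (Y ⁻¹' Ioi θ) := by
    ext ω; simp only [hSdef, Set.mem_setOf_eq, Set.mem_inter_iff, Set.mem_preimage,
      Set.mem_Ioi]; tauto
  rw [hevent, hPairY.measure_inter_preimage_eq_mul S (Ioi θ) hS measurableSet_Ioi]
  -- the Y factor
  have hYpart : Pr (Y ⁻¹' Ioi θ) = ENNReal.ofReal (exp (-(lamY * θ))) := by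
    rw [← Measure.map_apply hYm measurableSet_Ioi, hY, expMeasure_Ioi hlamY hθ]
  -- the (X,Z) factor
  set A := exp (-(lamX * τ)) / (1 + lamX * ρ * τ * Om) with hAdef
  set B := exp (-(lamX * ξ)) / (1 + lamX * ρ * ξ * Om) with hBdef
  have hdenτ : (0:ℝ) < 1 + lamX * ρ * τ * Om := by positivity
  have hdenξ : (0:ℝ) < 1 + lamX * ρ * ξ * Om := by positivity
  have hB0 : 0 ≤ B := by rw [hBdef]; positivity
  have hdivτ : (1/Om) / (1/Om + lamX * τ * ρ) = 1 / (1 + lamX * ρ * τ * Om) := by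
    rw [div_eq_div_iff (by positivity) hdenτ.ne']
    field_simp
  have hdivξ : (1/Om) / (1/Om + lamX * ξ * ρ) = 1 / (1 + lamX * ρ * ξ * Om) := by
    rw [div_eq_div_iff (by positivity) hdenξ.ne']
    field_simp
  have hXZpart : Pr ((fun ω => (X ω, Z ω)) ⁻¹' S) = ENNReal.ofReal (A - B) := by
    rw [← Measure.map_apply (hXm.prodMk hZm) hS, hmapXZ, Measure.prod_apply_symm hS]
    set f : ℝ → ℝ≥0∞ := fun z => ENNReal.ofReal (exp (-(lamX * τ + lamX * τ * ρ * z)))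
      with hfdef
    set g : ℝ → ℝ≥0∞ := fun z => ENNReal.ofReal (exp (-(lamX * ξ + lamX * ξ * ρ * z)))
      with hgdef
    have hae : ∀ᵐ z ∂(expMeasure (1 / Om)),
        expMeasure lamX ((fun x => (x, z)) ⁻¹' S) = f z - g z := by
      filter_upwards [expMeasure_ae_nonneg (1 / Om)] with z hz
      have hzp : (0:ℝ) < ρ * z + 1 := by nlinarith
      have hpre : (fun x => (x, z)) ⁻¹' S = Ioo (τ * (ρ * z + 1)) (ξ * (ρ * z + 1)) := by
        ext x; simp [hSdef, Set.mem_Ioo]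
      rw [hpre, expMeasure_Ioo hlamX (by positivity) (by nlinarith),
        show lamX * (τ * (ρ * z + 1)) = lamX * τ + lamX * τ * ρ * z by ring,
        show lamX * (ξ * (ρ * z + 1)) = lamX * ξ + lamX * ξ * ρ * z by ring,
        ENNReal.ofReal_sub _ (exp_pos _).le]
    rw [lintegral_congr_ae hae,
      lintegral_sub (by fun_prop)
        (by rw [hgdef]; rw [expMeasure_lintegral_exp' hOm' (by positivity)]
            exact ENNReal.ofReal_ne_top)
        (by filter_upwards [expMeasure_ae_nonneg (1 / Om)] with z hz
            apply ENNReal.ofReal_le_ofReal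
            apply exp_le_exp.2
            nlinarith [mul_pos hlamX (sub_pos.2 hτξ),
              mul_nonneg (mul_nonneg (mul_nonneg hlamX.le (sub_pos.2 hτξ).le) hρ.le) hz])]
    rw [hfdef, hgdef, expMeasure_lintegral_exp' hOm' (by positivity),
      expMeasure_lintegral_exp' hOm' (by positivity)]
    rw [hdivτ, hdivξ, mul_one_div, mul_one_div, ← hAdef, ← hBdef,
      ← ENNReal.ofReal_sub _ hB0]
  rw [hXZpart, hYpart, mul_comm, ← ENNReal.ofReal_mul (exp_pos _).le]
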